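/- arXiv:2108.12627 — 2 statements merged into one kernel-verified Lean document; each statement's English description precedes it below -/
import Mathlib

section
/- The function L(x) = (1/a)·log(e^{ax} + e^{-ax} + b) with a > 0 and b ≥ 0 is convex on ℝ. -/
open Real

theorem stmt_0 (a b : ℝ) (ha : 0 < a) (hb : 0 ≤ b) :
    ConvexOn ℝ Set.univ
      (fun x : ℝ => (1 / a) * Real.log (Real.exp (a * x) + Real.exp (-(a * x)) + b)) := by
  set G : ℝ → ℝ := fun x => Real.exp (a * x) + Real.exp (-(a * x)) + b with hGdef
  have hGpos : ∀ x, 0 < G x := fun x => by positivity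
  have he1 : ∀ x : ℝ, HasDerivAt (fun x : ℝ => Real.exp (a * x)) (a * Real.exp (a * x)) x := by
    intro x
    have := (Real.hasDerivAt_exp (a * x)).comp x ((hasDerivAt_id x).const_mul a)
    exact this.congr_deriv (by ring)
  have he2 : ∀ x : ℝ, HasDerivAt (fun x : ℝ => Real.exp (-(a * x))) (-(a * Real.exp (-(a * x)))) x := by
    intro x
    have := (Real.hasDerivAt_exp (-(a * x))).comp x (((hasDerivAt_id x).const_mul a).neg)
    exact this.congr_deriv (by ring)
  have hG : ∀ x, HasDerivAt G (a * Real.exp (a * x) - a * Real.exp (-(a * x))) x := by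
    intro x
    exact ((he1 x).add (he2 x)).add_const b
  set F : ℝ → ℝ := fun x => (1 / a) * Real.log (G x) with hFdef
  have hF : ∀ x, HasDerivAt F ((1 / a) * ((a * Real.exp (a * x) - a * Real.exp (-(a * x))) / G x)) x := by
    intro x
    exact ((hG x).log (hGpos x).ne').const_mul (1 / a)
  have hderiv : deriv F = fun x => (1 / a) * ((a * Real.exp (a * x) - a * Real.exp (-(a * x))) / G x) :=
    funext fun x => (hF x).deriv
  have hF2 : ∀ x, HasDerivAt (deriv F)
      ((1 / a) * (((a * (a * Real.exp (a * x)) - a * (-(a * Real.exp (-(a * x))))) * G x -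
        (a * Real.exp (a * x) - a * Real.exp (-(a * x))) *
          (a * Real.exp (a * x) - a * Real.exp (-(a * x)))) / (G x) ^ 2)) x := by
    intro x
    rw [hderiv]
    have hnum : HasDerivAt (fun x => a * Real.exp (a * x) - a * Real.exp (-(a * x)))
        (a * (a * Real.exp (a * x)) - a * (-(a * Real.exp (-(a * x))))) x :=
      ((he1 x).const_mul a).sub ((he2 x).const_mul a)
    exact (hnum.div (hG x) (hGpos x).ne').const_mul (1 / a)
  apply convexOn_of_deriv2_nonneg convex_univ
  · exact (continuous_iff_continuousAt.2 fun x => (hF x).differentiableAt.continuousAt).continuousOn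
  · intro x _
    exact (hF x).differentiableAt.differentiableWithinAt
  · intro x _
    exact (hF2 x).differentiableAt.differentiableWithinAt
  · intro x _
    have h2 := (hF2 x).deriv
    simp only [Function.iterate_succ, Function.iterate_zero, Function.comp_apply, id_eq]
    rw [h2]
    have hmul : Real.exp (a * x) * Real.exp (-(a * x)) = 1 := by
      rw [← Real.exp_add]; simp
    have hG0 := hGpos x
    have hu := Real.exp_pos (a * x)
    have hv := Real.exp_pos (-(a * x))
    have hGx : G x = Real.exp (a * x) + Real.exp (-(a * x)) + b := rfl
    rw [hGx] at hG0 ⊢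
    apply mul_nonneg (by positivity)
    apply div_nonneg _ (by positivity)
    have key : a ^ 2 * (Real.exp (a * x) * Real.exp (-(a * x))) = a ^ 2 := by
      rw [hmul]; ring
    nlinarith [key, mul_nonneg (mul_nonneg (sq_nonneg a) hb) hu.le,
      mul_nonneg (mul_nonneg (sq_nonneg a) hb) hv.le, sq_nonneg a]
end

section
/- L_M(x) = (1/a)·log(e^{ax}+e^{-ax}+b) with a > 0 and b > -2 is convex on all of ℝ if and only if b ≥ 0. -/
open Real

private lemma Epos (a b : ℝ) (hb : 0 < b + 2) (x : ℝ) :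
    0 < Real.exp (a * x) + Real.exp (-(a * x)) + b := by
  have h1 : 0 < Real.exp (a * x) := Real.exp_pos _
  have h2 : Real.exp (a * x) * Real.exp (-(a * x)) = 1 := by
    rw [← Real.exp_add]; simp
  nlinarith [sq_nonneg (Real.exp (a * x) - 1)]

private lemma hasDerivD (a b : ℝ) (x : ℝ) :
    HasDerivAt (fun x : ℝ => Real.exp (a * x) + Real.exp (-(a * x)) + b)
      (a * Real.exp (a * x) - a * Real.exp (-(a * x))) x := by
  have h1 : HasDerivAt (fun x : ℝ => a * x) a x := by
    simpa using (hasDerivAt_id x).const_mul a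
  have h2 : HasDerivAt (fun x : ℝ => Real.exp (a * x)) (Real.exp (a * x) * a) x := h1.exp
  have h3 : HasDerivAt (fun x : ℝ => -(a * x)) (-a) x := h1.neg
  have h4 : HasDerivAt (fun x : ℝ => Real.exp (-(a * x))) (Real.exp (-(a * x)) * (-a)) x := h3.exp
  have := (h2.add h4).add_const b
  refine this.congr_deriv ?_
  ring

private lemma hasDerivF (a b : ℝ) (ha : 0 < a) (hb : 0 < b + 2) (x : ℝ) :
    HasDerivAt (fun x : ℝ => (1 / a) * Real.log (Real.exp (a * x) + Real.exp (-(a * x)) + b))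
      ((Real.exp (a * x) - Real.exp (-(a * x))) /
        (Real.exp (a * x) + Real.exp (-(a * x)) + b)) x := by
  have hE := Epos a b hb x
  have := ((hasDerivD a b x).log hE.ne').const_mul (1 / a)
  refine this.congr_deriv ?_
  field_simp

private lemma Ppos (c : ℝ) (h0 : 0 < c) (h2 : c < 2) :
    0 < c^6 - 32*c^5 + 254*c^4 + 2048*c^2 - 32768*c + 131072 := by
  nlinarith [pow_pos h0 4, pow_pos h0 6, sq_nonneg c, mul_pos (pow_pos h0 4) (sub_pos.mpr h2)]

set_option maxHeartbeats 1000000 in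
theorem stmt_6 (a b : ℝ) (ha : 0 < a) (hb : 0 < b + 2) :
    ConvexOn ℝ Set.univ
      (fun x : ℝ => (1 / a) * Real.log (Real.exp (a * x) + Real.exp (-(a * x)) + b)) ↔
      0 ≤ b := by
  constructor
  · -- convex → 0 ≤ b
    intro h
    by_contra hb0
    push_neg at hb0
    set c : ℝ := -b with hc
    have hc0 : 0 < c := by simp [hc]; linarith
    have hc2 : c < 2 := by simp [hc]; linarith
    -- points
    set u : ℝ := 2 / c with hu
    set v : ℝ := 32 / c ^ 2 with hv
    have hu0 : 0 < u := by positivity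
    have hv0 : 0 < v := by positivity
    set x0 : ℝ := Real.log u / a with hx0
    set x1 : ℝ := Real.log v / a with hx1
    set x2 : ℝ := 2 * x1 - x0 with hx2
    have hax0 : a * x0 = Real.log u := by rw [hx0]; field_simp
    have hax1 : a * x1 = Real.log v := by rw [hx1]; field_simp
    have hax2 : a * x2 = Real.log (v ^ 2 / u) := by
      rw [hx2]; rw [Real.log_div (by positivity) (by positivity), Real.log_pow]
      rw [hx0, hx1]; field_simp; push_cast; ring
    have he0 : Real.exp (a * x0) = u := by rw [hax0, Real.exp_log hu0]
    have he1 : Real.exp (a * x1) = v := by rw [hax1, Real.exp_log hv0]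
    have he2 : Real.exp (a * x2) = v ^ 2 / u := by
      rw [hax2, Real.exp_log (by positivity)]
    have hne0 : Real.exp (-(a * x0)) = 1 / u := by
      rw [Real.exp_neg, he0]; field_simp
    have hne1 : Real.exp (-(a * x1)) = 1 / v := by
      rw [Real.exp_neg, he1]; field_simp
    have hne2 : Real.exp (-(a * x2)) = u / v ^ 2 := by
      rw [Real.exp_neg, he2]; field_simp
    -- convexity inequality with weights 1/2
    have hmid : (1/2 : ℝ) • x0 + (1/2 : ℝ) • x2 = x1 := by
      simp only [smul_eq_mul]; rw [hx2]; ring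
    have key := h.2 (Set.mem_univ x0) (Set.mem_univ x2)
      (by norm_num : (0:ℝ) ≤ 1/2) (by norm_num : (0:ℝ) ≤ 1/2) (by norm_num)
    rw [hmid] at key
    simp only [smul_eq_mul] at key
    -- rewrite in terms of E's
    set E0 : ℝ := u + 1/u + b with hE0
    set E1 : ℝ := v + 1/v + b with hE1
    set E2 : ℝ := v^2/u + u/v^2 + b with hE2
    rw [he0, he1, he2, hne0, hne1, hne2] at key
    have hE0pos : 0 < E0 := by
      have := Epos a b hb x0; rwa [he0, hne0] at this
    have hE1pos : 0 < E1 := by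
      have := Epos a b hb x1; rwa [he1, hne1] at this
    have hE2pos : 0 < E2 := by
      have := Epos a b hb x2; rwa [he2, hne2] at this
    -- from key : (1/a) log E1 ≤ (1/2)(1/a) log E0 + (1/2)(1/a) log E2
    have hlog : Real.log (E1 ^ 2) ≤ Real.log (E0 * E2) := by
      rw [Real.log_pow, Real.log_mul hE0pos.ne' hE2pos.ne']
      have ha' : (0:ℝ) < 1 / a := by positivity
      push_cast
      nlinarith [key]
    have hle : E1 ^ 2 ≤ E0 * E2 :=
      (Real.log_le_log_iff (by positivity) (by positivity)).mp hlog
    -- contradiction: E1^2 > E0 * E2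
    have hgt : E0 * E2 < E1 ^ 2 := by
      have hbc : b = -c := by simp [hc]
      rw [hE0, hE1, hE2, hu, hv, hbc, ← sub_pos]
      have hcne : c ≠ 0 := hc0.ne'
      have key2 : (32/c^2 + 1/(32/c^2) + -c)^2 -
          (2/c + 1/(2/c) + -c)*((32/c^2)^2/(2/c) + (2/c)/(32/c^2)^2 + -c)
          = (c^6 - 32*c^5 + 254*c^4 + 2048*c^2 - 32768*c + 131072)/(512*c^2) := by
        field_simp
        ring
      rw [key2]
      have hP := Ppos c hc0 hc2
      positivity
    linarith
  · -- 0 ≤ b → convex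
    intro hb0
    have hdiff : Differentiable ℝ
        (fun x : ℝ => (1 / a) * Real.log (Real.exp (a * x) + Real.exp (-(a * x)) + b)) :=
      fun x => (hasDerivF a b ha hb x).differentiableAt
    apply Monotone.convexOn_univ_of_deriv hdiff
    have hderiv : deriv (fun x : ℝ => (1 / a) * Real.log (Real.exp (a * x) + Real.exp (-(a * x)) + b)) =
        fun x => (Real.exp (a * x) - Real.exp (-(a * x))) /
          (Real.exp (a * x) + Real.exp (-(a * x)) + b) := by
      funext x; exact (hasDerivF a b ha hb x).deriv
    rw [hderiv]
    intro x y hxy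
    have hEx := Epos a b hb x
    have hEy := Epos a b hb y
    rw [div_le_div_iff₀ hEx hEy]
    have hpx : 0 < Real.exp (a * x) := Real.exp_pos _
    have hpy : 0 < Real.exp (a * y) := Real.exp_pos _
    have hix : Real.exp (-(a * x)) = 1 / Real.exp (a * x) := by
      rw [Real.exp_neg]; field_simp
    have hiy : Real.exp (-(a * y)) = 1 / Real.exp (a * y) := by
      rw [Real.exp_neg]; field_simp
    have hle : Real.exp (a * x) ≤ Real.exp (a * y) :=
      Real.exp_le_exp.mpr (by nlinarith)
    set p := Real.exp (a * x)
    set q := Real.exp (a * y)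
    rw [hix, hiy]
    have h1 : 0 ≤ 2*(p+q) + b*(p*q) + b := by
      have := mul_pos hpx hpy
      nlinarith
    have h2 : 0 ≤ (q - p) * (2*(p+q) + b*(p*q) + b) :=
      mul_nonneg (by linarith) h1
    have hpq : 0 < p * q := mul_pos hpx hpy
    rw [← sub_nonneg]
    have key : (q - 1 / q) * (p + 1 / p + b) - (p - 1 / p) * (q + 1 / q + b)
        = (q - p) * (2*(p+q) + b*(p*q) + b) / (p * q) := by
      field_simp
      ring
    rw [key]
    positivity
end
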